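/- Suppose Δ ≠ 0 and t ≠ 0. Then there exist k₁, k₂ ∈ [0,2π) with E_+(k₁,k₂) = E_-(k₁,k₂) (a band touching) if and only if μ/(2t) ∈ {-2, 0, 2}. -/
import Mathlib


noncomputable section

/-- The Bloch band functions of the p_x + i p_y model. -/
def bandPlus (t Δ' μ' k₁ k₂ : ℝ) : ℝ :=
  2 * |t| * Real.sqrt (Δ' ^ 2 * Real.sin k₁ ^ 2 + Δ' ^ 2 * Real.sin k₂ ^ 2
    + (μ' + Real.cos k₁ + Real.cos k₂) ^ 2)

def bandMinus (t Δ' μ' k₁ k₂ : ℝ) : ℝ := - bandPlus t Δ' μ' k₁ k₂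

/-- For `Δ ≠ 0` and `t ≠ 0`, band touchings occur iff `μ/(2t) ∈ {-2, 0, 2}`. -/
theorem band_touching_iff (μ t Δ : ℝ) (hΔ : Δ ≠ 0) (ht : t ≠ 0) :
    (∃ k₁ ∈ Set.Ico (0 : ℝ) (2 * Real.pi), ∃ k₂ ∈ Set.Ico (0 : ℝ) (2 * Real.pi),
      bandPlus t (Δ / (2 * t)) (μ / (2 * t)) k₁ k₂ =
        bandMinus t (Δ / (2 * t)) (μ / (2 * t)) k₁ k₂) ↔
      μ / (2 * t) ∈ ({-2, 0, 2} : Set ℝ) := by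
  set Δ' := Δ / (2 * t) with hΔ'def
  set μ' := μ / (2 * t) with hμ'def
  have hΔ' : Δ' ≠ 0 := div_ne_zero hΔ (by simpa using ht)
  have ht' : (0:ℝ) < 2 * |t| := by positivity
  have hπ := Real.pi_pos
  constructor
  · rintro ⟨k₁, hk₁, k₂, hk₂, h⟩
    have h0 : bandPlus t Δ' μ' k₁ k₂ = 0 := by
      unfold bandMinus at h; linarith
    unfold bandPlus at h0
    have hs : Real.sqrt (Δ' ^ 2 * Real.sin k₁ ^ 2 + Δ' ^ 2 * Real.sin k₂ ^ 2
        + (μ' + Real.cos k₁ + Real.cos k₂) ^ 2) = 0 := by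
      rcases mul_eq_zero.mp h0 with h' | h'
      · exact absurd h' (ne_of_gt ht')
      · exact h'
    have hX : Δ' ^ 2 * Real.sin k₁ ^ 2 + Δ' ^ 2 * Real.sin k₂ ^ 2
        + (μ' + Real.cos k₁ + Real.cos k₂) ^ 2 = 0 := by
      have hnn : 0 ≤ Δ' ^ 2 * Real.sin k₁ ^ 2 + Δ' ^ 2 * Real.sin k₂ ^ 2
          + (μ' + Real.cos k₁ + Real.cos k₂) ^ 2 := by positivity
      exact (Real.sqrt_eq_zero hnn).mp hs
    have hΔsq : (0:ℝ) < Δ' ^ 2 := by positivity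
    have sin_zero : ∀ k : ℝ, Δ' ^ 2 * Real.sin k ^ 2 = 0 → Real.sin k = 0 := by
      intro k hk
      rcases mul_eq_zero.mp hk with h' | h'
      · exact absurd h' (ne_of_gt hΔsq)
      · exact pow_eq_zero_iff (n := 2) (by norm_num) |>.mp h'
    have hs1 : Real.sin k₁ = 0 := sin_zero k₁ (by nlinarith [sq_nonneg (Real.sin k₂), sq_nonneg (μ' + Real.cos k₁ + Real.cos k₂), sq_nonneg (Real.sin k₁), mul_nonneg (le_of_lt hΔsq) (sq_nonneg (Real.sin k₂)), mul_nonneg (le_of_lt hΔsq) (sq_nonneg (Real.sin k₁))])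
    have hs2 : Real.sin k₂ = 0 := sin_zero k₂ (by nlinarith [sq_nonneg (Real.sin k₂), sq_nonneg (μ' + Real.cos k₁ + Real.cos k₂), sq_nonneg (Real.sin k₁), mul_nonneg (le_of_lt hΔsq) (sq_nonneg (Real.sin k₂)), mul_nonneg (le_of_lt hΔsq) (sq_nonneg (Real.sin k₁))])
    have hsum : μ' + Real.cos k₁ + Real.cos k₂ = 0 := by
      nlinarith [sq_nonneg (μ' + Real.cos k₁ + Real.cos k₂)]
    have hc1 : Real.cos k₁ = 1 ∨ Real.cos k₁ = -1 := by
      have := Real.sin_sq_add_cos_sq k₁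
      rw [hs1] at this
      have h2 : (Real.cos k₁ - 1) * (Real.cos k₁ + 1) = 0 := by nlinarith
      rcases mul_eq_zero.mp h2 with h' | h'
      · left; linarith
      · right; linarith
    have hc2 : Real.cos k₂ = 1 ∨ Real.cos k₂ = -1 := by
      have := Real.sin_sq_add_cos_sq k₂
      rw [hs2] at this
      have h2 : (Real.cos k₂ - 1) * (Real.cos k₂ + 1) = 0 := by nlinarith
      rcases mul_eq_zero.mp h2 with h' | h'
      · left; linarith
      · right; linarith
    simp only [Set.mem_insert_iff, Set.mem_singleton_iff]
    rcases hc1 with h1 | h1 <;> rcases hc2 with h2 | h2 <;>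
      rw [h1, h2] at hsum
    · left; linarith
    · right; left; linarith
    · right; left; linarith
    · right; right; linarith
  · intro hμ
    have key : ∀ k₁ k₂ : ℝ, Real.sin k₁ = 0 → Real.sin k₂ = 0 →
        μ' + Real.cos k₁ + Real.cos k₂ = 0 →
        bandPlus t Δ' μ' k₁ k₂ = bandMinus t Δ' μ' k₁ k₂ := by
      intro k₁ k₂ h1 h2 h3
      unfold bandPlus bandMinus
      rw [show Δ' ^ 2 * Real.sin k₁ ^ 2 + Δ' ^ 2 * Real.sin k₂ ^ 2
          + (μ' + Real.cos k₁ + Real.cos k₂) ^ 2 = 0 by rw [h1, h2, h3]; ring]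
      simp [bandPlus, h1, h2, h3]
    have h0mem : (0:ℝ) ∈ Set.Ico (0:ℝ) (2 * Real.pi) := ⟨le_refl _, by linarith⟩
    have hπmem : Real.pi ∈ Set.Ico (0:ℝ) (2 * Real.pi) := ⟨le_of_lt hπ, by linarith⟩
    rcases hμ with h | h | h
    · exact ⟨0, h0mem, 0, h0mem, key 0 0 Real.sin_zero Real.sin_zero
        (by rw [h, Real.cos_zero]; ring)⟩
    · exact ⟨0, h0mem, Real.pi, hπmem, key 0 Real.pi Real.sin_zero Real.sin_pi
        (by rw [h, Real.cos_zero, Real.cos_pi]; ring)⟩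
    · exact ⟨Real.pi, hπmem, Real.pi, hπmem, key Real.pi Real.pi Real.sin_pi Real.sin_pi
        (by rw [h, Real.cos_pi]; ring)⟩
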